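/- Let λ ∈ ℝ, λ ≠ 0, A, B ∈ ℝ, and y(t) = A · Real.exp (λ·t) + B · Real.exp (−λ·t). Then for every t ∈ ℝ and every h ≠ 0, the central second difference with the hyperbolic spectral denominator is exact: (y(t+h) − 2·y(t) + y(t−h)) / ((2/λ) · Real.sinh (λ·h/2))² = λ² · y(t). -/

import Mathlib

theorem ssp2_hyperbolic_exact (lam : ℝ) (hlam : lam ≠ 0) (A B : ℝ) (y : ℝ → ℝ)
    (hy : ∀ t, y t = A * Real.exp (lam * t) + B * Real.exp (-lam * t)) :
    ∀ t h : ℝ, h ≠ 0 →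
      (y (t + h) - 2 * y t + y (t - h)) / ((2 / lam) * Real.sinh (lam * h / 2)) ^ 2
        = lam ^ 2 * y t := by
  intro t h hh
  have hs : Real.sinh (lam * h / 2) ≠ 0 :=
    Real.sinh_ne_zero.mpr (div_ne_zero (mul_ne_zero hlam hh) two_ne_zero)
  have ha : Real.exp (lam * t) ≠ 0 := Real.exp_ne_zero _
  have hb : Real.exp (lam * h / 2) ≠ 0 := Real.exp_ne_zero _
  have p2 : ∀ x : ℝ, Real.exp x ^ 2 = Real.exp (x + x) := fun x => by
    rw [Real.exp_add]; ring
  have p4 : ∀ x : ℝ, Real.exp x ^ 4 = Real.exp (x + x + x + x) := fun x => by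
    rw [Real.exp_add, Real.exp_add, Real.exp_add]; ring
  have e1 : Real.exp (lam * (t + h)) = Real.exp (lam * t) * Real.exp (lam * h / 2) ^ 2 := by
    rw [p2, ← Real.exp_add]; ring_nf
  have e2 : Real.exp (lam * (t - h)) = Real.exp (lam * t) / Real.exp (lam * h / 2) ^ 2 := by
    rw [p2, eq_div_iff (Real.exp_ne_zero _), ← Real.exp_add]; ring_nf
  have e3 : Real.exp (-lam * (t + h)) = Real.exp (lam * h / 2) ^ 2 / (Real.exp (lam * t) * Real.exp (lam * h / 2) ^ 4) := by
    rw [p2, p4, eq_div_iff (by positivity), ← Real.exp_add, ← Real.exp_add]; ring_nf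
  have e4 : Real.exp (-lam * t) = Real.exp (lam * h / 2) ^ 2 / (Real.exp (lam * t) * Real.exp (lam * h / 2) ^ 2) := by
    rw [p2, eq_div_iff (by positivity), ← Real.exp_add, ← Real.exp_add]; ring_nf
  have e5 : Real.exp (-lam * (t - h)) = Real.exp (lam * h / 2) ^ 2 / Real.exp (lam * t) := by
    rw [p2, eq_div_iff ha, ← Real.exp_add]; ring_nf
  have hsinh : Real.sinh (lam * h / 2)
      = (Real.exp (lam * h / 2) ^ 2 - 1) / (2 * Real.exp (lam * h / 2)) := by
    rw [Real.sinh_eq, p2, eq_div_iff (by positivity), Real.exp_neg]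
    field_simp
    rw [p2]
    ring_nf
  have hden : Real.exp (lam * h / 2) ^ 2 - 1 ≠ 0 := by
    intro hz
    exact hs (by rw [hsinh, hz, zero_div])
  rw [hy, hy, hy, e1, e2, e3, e4, e5, hsinh, div_eq_iff (by positivity)]
  field_simp
  ring
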